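/- For every real x with 0 ≤ x ≤ 1/2, one has f(x) := 4/9 + 15x² − 8x + (4/π²)·(2 sin²(πx) + sin²(2πx)) > 0. -/

import Mathlib

set_option maxHeartbeats 2000000

open Real

private lemma mono_aux {f f' : ℝ → ℝ} (hd : ∀ v, HasDerivAt f (f' v) v)
    (hpos : ∀ v, 0 ≤ v → 0 ≤ f' v) {u : ℝ} (hu : 0 ≤ u) : f 0 ≤ f u := by
  have hm : MonotoneOn f (Set.Ici (0:ℝ)) := by
    apply monotoneOn_of_deriv_nonneg (convex_Ici 0)
      (fun v _ => (hd v).continuousAt.continuousWithinAt)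
      (fun v _ => (hd v).differentiableAt.differentiableWithinAt)
    intro v hv
    rw [(hd v).deriv]
    exact hpos v (le_of_lt (by simpa using hv))
  exact hm Set.self_mem_Ici hu hu

private lemma sin_ge3 {u : ℝ} (hu : 0 ≤ u) : u - u^3/6 ≤ Real.sin u := by
  have h : Real.sin 0 - 0 + 0^3/6 ≤ Real.sin u - u + u^3/6 :=
    mono_aux (f' := fun v => Real.cos v - 1 + v^2/2)
      (fun v => by
        have h := ((Real.hasDerivAt_sin v).sub (hasDerivAt_id v)).add
          ((hasDerivAt_pow 3 v).div_const 6)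
        convert h using 1
        exacts [rfl, rfl, by norm_num; ring])
      (fun v _ => by linarith [Real.one_sub_sq_div_two_le_cos (x := v)]) hu
  simp at h; linarith

private lemma cos_le4 {u : ℝ} (hu : 0 ≤ u) : Real.cos u ≤ 1 - u^2/2 + u^4/24 := by
  have h : (1:ℝ) - 0^2/2 + 0^4/24 - Real.cos 0 ≤ 1 - u^2/2 + u^4/24 - Real.cos u :=
    mono_aux (f' := fun v => Real.sin v - v + v^3/6)
      (fun v => by
        have h := (((hasDerivAt_const v (1:ℝ)).sub ((hasDerivAt_pow 2 v).div_const 2)).add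
          ((hasDerivAt_pow 4 v).div_const 24)).sub (Real.hasDerivAt_cos v)
        convert h using 1
        exacts [rfl, rfl, by norm_num; ring])
      (fun v hv => by linarith [sin_ge3 hv]) hu
  simp at h; linarith

private lemma sin_le5 {u : ℝ} (hu : 0 ≤ u) : Real.sin u ≤ u - u^3/6 + u^5/120 := by
  have h : (0:ℝ) - 0^3/6 + 0^5/120 - Real.sin 0 ≤ u - u^3/6 + u^5/120 - Real.sin u :=
    mono_aux (f' := fun v => 1 - v^2/2 + v^4/24 - Real.cos v)
      (fun v => by
        have h := (((hasDerivAt_id v).sub ((hasDerivAt_pow 3 v).div_const 6)).add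
          ((hasDerivAt_pow 5 v).div_const 120)).sub (Real.hasDerivAt_sin v)
        convert h using 1
        exacts [rfl, rfl, by norm_num; ring])
      (fun v hv => by linarith [cos_le4 hv]) hu
  simp at h; linarith

private lemma cos_ge6 {u : ℝ} (hu : 0 ≤ u) :
    1 - u^2/2 + u^4/24 - u^6/720 ≤ Real.cos u := by
  have h : Real.cos 0 - 1 + 0^2/2 - 0^4/24 + 0^6/720 ≤
      Real.cos u - 1 + u^2/2 - u^4/24 + u^6/720 :=
    mono_aux (f' := fun v => v - v^3/6 + v^5/120 - Real.sin v)
      (fun v => by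
        have h := ((((Real.hasDerivAt_cos v).sub (hasDerivAt_const v (1:ℝ))).add
          ((hasDerivAt_pow 2 v).div_const 2)).sub ((hasDerivAt_pow 4 v).div_const 24)).add
          ((hasDerivAt_pow 6 v).div_const 720)
        convert h using 1
        exacts [rfl, rfl, by norm_num; ring])
      (fun v hv => by linarith [sin_le5 hv]) hu
  simp at h; linarith

private lemma sin_ge7 {u : ℝ} (hu : 0 ≤ u) :
    u - u^3/6 + u^5/120 - u^7/5040 ≤ Real.sin u := by
  have h : Real.sin 0 - 0 + 0^3/6 - 0^5/120 + 0^7/5040 ≤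
      Real.sin u - u + u^3/6 - u^5/120 + u^7/5040 :=
    mono_aux (f' := fun v => Real.cos v - 1 + v^2/2 - v^4/24 + v^6/720)
      (fun v => by
        have h := ((((Real.hasDerivAt_sin v).sub (hasDerivAt_id v)).add
          ((hasDerivAt_pow 3 v).div_const 6)).sub ((hasDerivAt_pow 5 v).div_const 120)).add
          ((hasDerivAt_pow 7 v).div_const 5040)
        convert h using 1
        exacts [rfl, rfl, by norm_num; ring])
      (fun v hv => by linarith [cos_ge6 hv]) hu
  simp at h; linarith

private lemma pol7_nonneg {u : ℝ} (h0 : 0 ≤ u) (h2 : u ≤ 2) :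
    0 ≤ u - u^3/6 + u^5/120 - u^7/5040 := by
  nlinarith [pow_nonneg h0 3, pow_nonneg h0 5, pow_nonneg h0 7, sq_nonneg u,
    mul_nonneg (pow_nonneg h0 5) (sub_nonneg.2 h2), mul_nonneg h0 (sub_nonneg.2 h2)]

private lemma poly8' (x : ℝ) (h0 : 0 ≤ x) (h2 : x ≤ 1/4) :
    0 < 4/9 - 8*x + 39*x^2 - 24*(98697/10000)*x^4 + (176/15)*(98696/10000)^2*x^6
      - ((344/105)*(98697/10000)^3 + (683/12600)*(98697/10000)^5*(1/256))*x^8 := by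
  nlinarith [sq_nonneg (x - 12269/100000), sq_nonneg (x^2 - 12269/100000*x),
    mul_nonneg h0 (sub_nonneg.2 h2), sq_nonneg x, sq_nonneg (x^3 - 12269/100000*x^2),
    sq_nonneg (x^4 - 12269/100000*x^3)]

/-- For `0 ≤ x ≤ 1/2`,
`4/9 + 15x² − 8x + (4/π²)(2 sin²(πx) + sin²(2πx)) > 0`. -/
theorem f_pos (x : ℝ) (hx1 : 0 ≤ x) (hx2 : x ≤ 1 / 2) :
    0 < 4 / 9 + 15 * x ^ 2 - 8 * x +
      4 * (2 * Real.sin (π * x) ^ 2 + Real.sin (2 * π * x) ^ 2) / π ^ 2 := by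
  have hπ := Real.pi_pos
  have hπ2 : (0:ℝ) < π^2 := by positivity
  have hlo : (98696/10000:ℝ) ≤ π^2 := by nlinarith [Real.pi_gt_d6]
  have hhi : π^2 ≤ (98697/10000:ℝ) := by nlinarith [Real.pi_lt_d6, Real.pi_gt_d6]
  have hπlt : π < 3.141593 := Real.pi_lt_d6
  rcases le_or_gt x (1/4) with hq | hq
  · -- Taylor lower bound case
    have hu0 : 0 ≤ π*x := by positivity
    have hv0 : 0 ≤ 2*π*x := by positivity
    have hu2 : π*x ≤ 2 := by nlinarith
    have hv2 : 2*π*x ≤ 2 := by nlinarith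
    set A := π*x - (π*x)^3/6 + (π*x)^5/120 - (π*x)^7/5040 with hAdef
    set B := 2*π*x - (2*π*x)^3/6 + (2*π*x)^5/120 - (2*π*x)^7/5040 with hBdef
    have hA : A ≤ Real.sin (π*x) := sin_ge7 hu0
    have hB : B ≤ Real.sin (2*π*x) := sin_ge7 hv0
    have hA0 : 0 ≤ A := pol7_nonneg hu0 hu2
    have hB0 : 0 ≤ B := pol7_nonneg hv0 hv2
    have hA2 : A^2 ≤ Real.sin (π*x)^2 := by nlinarith
    have hB2 : B^2 ≤ Real.sin (2*π*x)^2 := by nlinarith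
    have hdiv : 4*(2*A^2+B^2)/π^2 ≤
        4 * (2 * Real.sin (π * x) ^ 2 + Real.sin (2 * π * x) ^ 2) / π ^ 2 :=
      div_le_div_of_nonneg_right (by linarith) hπ2.le
    have hR : 4*(2*A^2+B^2)/π^2 = 24*x^2 - 24*π^2*x^4 + (176/15)*π^4*x^6
        - (344/105)*π^6*x^8 + (779/1400)*π^8*x^10 - (683/12600)*π^10*x^12
        + (2731/1058400)*π^12*x^14 := by
      have hkey : 4*(2*A^2+B^2) = π^2 * (24*x^2 - 24*π^2*x^4 + (176/15)*π^4*x^6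
        - (344/105)*π^6*x^8 + (779/1400)*π^8*x^10 - (683/12600)*π^10*x^12
        + (2731/1058400)*π^12*x^14) := by rw [hAdef, hBdef]; ring
      rw [hkey]
      rw [mul_comm, mul_div_assoc]
      rw [div_self hπ2.ne', mul_one]
    rw [hR] at hdiv
    have hp4 : (98696/10000:ℝ)^2 ≤ π^4 := by nlinarith
    have hp6 : π^6 ≤ (98697/10000:ℝ)^3 := by nlinarith [sq_nonneg π, sq_nonneg (π^2)]
    have hp10 : π^10 ≤ (98697/10000:ℝ)^5 := by
      have h := pow_le_pow_left₀ (sq_nonneg π) hhi 5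
      calc π^10 = (π^2)^5 := by ring
      _ ≤ _ := h
    have hx4 : x^4 ≤ (1/4:ℝ)^4 := pow_le_pow_left₀ hx1 hq 4
    have t4 : -24*π^2*x^4 ≥ -24*(98697/10000)*x^4 := by nlinarith [pow_nonneg hx1 4]
    have t6 : (176/15)*π^4*x^6 ≥ (176/15)*(98696/10000)^2*x^6 := by
      nlinarith [pow_nonneg hx1 6]
    have t8 : -(344/105)*π^6*x^8 ≥ -(344/105)*(98697/10000)^3*x^8 := by
      nlinarith [pow_nonneg hx1 8]
    have t10 : 0 ≤ (779/1400)*π^8*x^10 := by positivity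
    have t14 : 0 ≤ (2731/1058400)*π^12*x^14 := by positivity
    have hx12 : x^12 ≤ x^8*(1/256) := by nlinarith [pow_nonneg hx1 8, hx4]
    have t12 : -(683/12600)*π^10*x^12 ≥ -(683/12600)*((98697/10000)^5*(x^8*(1/256))) := by
      have h := mul_le_mul hp10 hx12 (pow_nonneg hx1 12) (by positivity)
      nlinarith [h]
    have hpoly := poly8' x hx1 hq
    linarith [hdiv, t4, t6, t8, t10, t12, t14, hpoly]
  · -- large x case
    have hmem1 : π/4 ∈ Set.Icc (-(π/2)) (π/2) := by constructor <;> nlinarith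
    have hmem2 : π*x ∈ Set.Icc (-(π/2)) (π/2) := by constructor <;> nlinarith
    have hs : Real.sin (π/4) ≤ Real.sin (π*x) :=
      Real.strictMonoOn_sin.monotoneOn hmem1 hmem2 (by nlinarith)
    rw [Real.sin_pi_div_four] at hs
    have hs2 : 1/2 ≤ Real.sin (π*x)^2 := by
      nlinarith [Real.sq_sqrt (by norm_num : (2:ℝ) ≥ 0), Real.sqrt_nonneg 2]
    have hs1 : Real.sin (π*x)^2 ≤ 1 := Real.sin_sq_le_one _
    have h2m : Real.sin (2*π*x)^2 = 4*Real.sin (π*x)^2*(1 - Real.sin (π*x)^2) := by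
      have h : 2*π*x = 2*(π*x) := by ring
      rw [h, Real.sin_two_mul]
      have hc := Real.sin_sq_add_cos_sq (π*x)
      nlinarith [hc]
    have htrig : 2 ≤ 2 * Real.sin (π * x) ^ 2 + Real.sin (2 * π * x) ^ 2 := by
      rw [h2m]; nlinarith
    have hd : (8:ℝ)/π^2 ≤ 4 * (2 * Real.sin (π * x) ^ 2 + Real.sin (2 * π * x) ^ 2) / π ^ 2 :=
      div_le_div_of_nonneg_right (by linarith) hπ2.le
    have h8 : (8:ℝ)/(98697/10000) ≤ 8/π^2 :=
      div_le_div_of_nonneg_left (by norm_num) hπ2 hhi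
    have hsq : -16/15 ≤ 15*x^2 - 8*x := by nlinarith [sq_nonneg (x - 4/15)]
    linarith [hd, h8, hsq]
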